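/- Let q be a prime and for each ν ≥ 0 set A(ν) = ∑_{t ∈ ℤ, t² < 4q^ν} H(4q^ν − t²) U_{k−2}(t/(2 q^{ν/2})), where k ≥ 4 is even and U denotes Chebyshev polynomials of the second kind. If the power series ∑_ν A(ν) q^{−ν/2} X^ν extends to a holomorphic function on |X| < 1, then for every ε > 0, |A(ν)| = O_ε(q^{ν(1/2 + ε)}). -/

import Mathlib

open scoped BigOperators

noncomputable section

/-- Positive definite integral binary quadratic forms of discriminant `−D`. -/
def IsPosDefQF (D : ℕ) (g : ℤ → ℤ → ℤ) : Prop :=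
  ∃ a b c : ℤ, 0 < a ∧ b ^ 2 - 4 * a * c = -(D : ℤ) ∧
    ∀ x y : ℤ, g x y = a * x ^ 2 + b * x * y + c * y ^ 2

/-- Action of `SL₂(ℤ)` on binary quadratic forms by linear change of variables. -/
def qfAct (γ : Matrix.SpecialLinearGroup (Fin 2) ℤ) (g : ℤ → ℤ → ℤ) : ℤ → ℤ → ℤ :=
  fun x y => g (γ.1 0 0 * x + γ.1 0 1 * y) (γ.1 1 0 * x + γ.1 1 1 * y)

/-- Equivalence of positive definite forms of discriminant `−D` under `SL₂(ℤ)`. -/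
def QFEquiv (D : ℕ) (g₁ g₂ : {g : ℤ → ℤ → ℤ // IsPosDefQF D g}) : Prop :=
  ∃ γ : Matrix.SpecialLinearGroup (Fin 2) ℤ, qfAct γ g₁.1 = g₂.1

/-- Cardinality of the stabilizer of a form in `SL₂(ℤ)`; the stabilizer in `PSL₂(ℤ)`
has half this cardinality since `−1` acts trivially. -/
def qfStabCard (g : ℤ → ℤ → ℤ) : ℕ :=
  Set.ncard {γ : Matrix.SpecialLinearGroup (Fin 2) ℤ | qfAct γ g = g}

/-- The Hurwitz class number `H(D) = ∑_Q 1/#Γ_Q`, the sum ranging over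
`PSL₂(ℤ)`-classes of positive definite integral binary quadratic forms of
discriminant `−D`, with `Γ_Q` the stabilizer of `Q` in `PSL₂(ℤ)`
(of cardinality `qfStabCard/2`). -/
def hurwitzH (D : ℕ) : ℚ :=
  ∑ᶠ c : Quot (QFEquiv D), 2 / (qfStabCard (Quot.out c).1 : ℚ)

end

open Metric

open Filter NNReal ENNReal Topology in
lemma aux_coeff_bound {c : ℕ → ℂ} {G : ℂ → ℂ}
    (hG : DifferentiableOn ℂ G (ball (0:ℂ) 1)) {r : ℝ} (hr : 0 < r)
    (hser : ∀ X : ℂ, X ∈ ball (0:ℂ) r → HasSum (fun ν : ℕ => c ν * X ^ ν) (G X))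
    {a : ℝ≥0} (ha1 : (a:ℝ) < 1) :
    ∃ C : ℝ, 0 < C ∧ ∀ n, ‖c n‖ * (a:ℝ) ^ n ≤ C := by
  set p : FormalMultilinearSeries ℂ ℂ ℂ :=
    fun n => ContinuousMultilinearMap.mkPiRing ℂ (Fin n) (c n) with hpdef
  have hpn : ∀ n, ‖p n‖ = ‖c n‖ := fun n => ContinuousMultilinearMap.norm_mkPiRing (c n)
  have happ : ∀ n (y : ℂ), (p n fun _ => y) = c n * y ^ n := by
    intro n y
    simp [hpdef, ContinuousMultilinearMap.mkPiRing_apply, smul_eq_mul, mul_comm]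
  -- a small radius on which the series converges
  set ρ : ℝ≥0 := ⟨min r 1 / 2, by positivity⟩ with hρdef
  have hρpos : 0 < ρ := by
    rw [← NNReal.coe_lt_coe]
    show (0:ℝ) < min r 1 / 2
    have : (0:ℝ) < min r 1 := lt_min hr one_pos
    linarith
  have hρr : (ρ : ℝ) < r := by
    show min r 1 / 2 < r
    have h1 : min r 1 ≤ r := min_le_left _ _
    linarith
  have hρrad : (ρ : ℝ≥0∞) ≤ p.radius := by
    have hX : ((ρ:ℝ) : ℂ) ∈ ball (0:ℂ) r := by
      simp only [mem_ball, dist_zero_right, Complex.norm_real, Real.norm_eq_abs]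
      rw [abs_of_nonneg ρ.coe_nonneg]; exact hρr
    have hs := (hser _ hX).summable
    have ht := hs.tendsto_atTop_zero
    have ht' : Tendsto (fun n => ‖p n‖ * (ρ:ℝ) ^ n) atTop (𝓝 0) := by
      have := ht.norm
      simp only [norm_zero] at this
      refine this.congr fun n => ?_
      rw [norm_mul, norm_pow, Complex.norm_real, Real.norm_eq_abs,
        abs_of_nonneg ρ.coe_nonneg, hpn]
    exact p.le_radius_of_tendsto ht'
  have hball : HasFPowerSeriesOnBall G p 0 ρ := by
    refine ⟨hρrad, by exact_mod_cast hρpos, ?_⟩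
    intro y hy
    rw [EMetric.mem_ball, edist_zero_right] at hy
    have hy' : y ∈ ball (0:ℂ) r := by
      simp only [mem_ball, dist_zero_right]
      calc ‖y‖ = ((‖y‖₊ : ℝ)) := rfl
        _ < ρ := by exact_mod_cast hy
        _ < r := hρr
    simp only [happ, zero_add]
    exact hser y hy'
  have hAt : HasFPowerSeriesAt G p 0 := ⟨ρ, hball⟩
  -- the Cauchy power series of radius R, a < R < 1
  set R : ℝ≥0 := ⟨((a:ℝ) + 1) / 2, by positivity⟩ with hRdef
  have haR : a < R := by
    rw [← NNReal.coe_lt_coe]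
    show (a:ℝ) < ((a:ℝ) + 1) / 2
    linarith
  have hR1 : (R:ℝ) < 1 := by
    show ((a:ℝ) + 1) / 2 < 1
    linarith
  have hR0 : 0 < R := lt_of_le_of_lt (zero_le : (0:ℝ≥0) ≤ a) haR
  have hd : DifferentiableOn ℂ G (closedBall (0:ℂ) R) :=
    hG.mono (closedBall_subset_ball hR1)
  have h2 := hd.hasFPowerSeriesOnBall hR0
  have heq : p = cauchyPowerSeries G 0 R :=
    hAt.eq_formalMultilinearSeries h2.hasFPowerSeriesAt
  have hRrad : (R : ℝ≥0∞) ≤ p.radius := heq ▸ h2.r_le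
  have harad : (a : ℝ≥0∞) < p.radius :=
    lt_of_lt_of_le (by exact_mod_cast haR) hRrad
  obtain ⟨C, hC, hbd⟩ := p.norm_mul_pow_le_of_lt_radius harad
  exact ⟨C, hC, fun n => by rw [← hpn]; exact hbd n⟩


/-- Corollary (esti): with `A(ν) = ∑_{t²<4q^ν} H(4q^ν−t²) U_{k−2}(t/(2q^{ν/2}))` for a prime
`q` and even `k ≥ 4`, if `∑_ν A(ν) q^{−ν/2} X^ν` extends holomorphically to `|X| < 1`, then
`|A(ν)| = O_ε(q^{ν(1/2+ε)})` for every `ε > 0`. -/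
theorem esti (q k : ℕ) (hq : q.Prime) (hk : 4 ≤ k) (hkeven : Even k)
    (A : ℕ → ℝ)
    (hA : ∀ ν : ℕ, A ν =
      ∑ᶠ (t : ℤ) (_ : t ^ 2 < 4 * (q : ℤ) ^ ν),
        (hurwitzH (4 * (q : ℤ) ^ ν - t ^ 2).toNat : ℝ) *
          (Polynomial.Chebyshev.U ℝ ((k : ℤ) - 2)).eval
            ((t : ℝ) / (2 * Real.sqrt ((q : ℝ) ^ ν))))
    (G : ℂ → ℂ) (hG : DifferentiableOn ℂ G (ball (0 : ℂ) 1))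
    (r : ℝ) (hr : 0 < r)
    (hser : ∀ X : ℂ, X ∈ ball (0 : ℂ) r →
      HasSum (fun ν : ℕ => ((A ν / Real.sqrt ((q : ℝ) ^ ν) : ℝ) : ℂ) * X ^ ν) (G X)) :
    ∀ ε : ℝ, 0 < ε → ∃ C : ℝ, 0 < C ∧
      ∀ ν : ℕ, |A ν| ≤ C * (q : ℝ) ^ ((ν : ℝ) * (1 / 2 + ε)) := by
  intro ε hε
  have hq1 : (1:ℝ) < q := by exact_mod_cast hq.one_lt
  have hq0 : (0:ℝ) < q := lt_trans one_pos hq1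
  set a : NNReal := Real.toNNReal ((q:ℝ) ^ (-ε)) with hadef
  have hacoe : (a:ℝ) = (q:ℝ) ^ (-ε) := Real.coe_toNNReal _ (Real.rpow_nonneg hq0.le _)
  have ha1 : (a:ℝ) < 1 := by
    rw [hacoe]; exact Real.rpow_lt_one_of_one_lt_of_neg hq1 (neg_neg_of_pos hε)
  have hapos : (0:ℝ) < (a:ℝ) := by rw [hacoe]; exact Real.rpow_pos_of_pos hq0 _
  obtain ⟨C, hC, hbd⟩ := aux_coeff_bound hG hr hser ha1
  refine ⟨C, hC, fun ν => ?_⟩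
  set S := Real.sqrt ((q:ℝ)^ν) with hS
  have hSpos : 0 < S := Real.sqrt_pos.2 (by positivity)
  have haν : (0:ℝ) < (a:ℝ)^ν := pow_pos hapos ν
  have h1 := hbd ν
  have hnorm : ‖((A ν / S : ℝ) : ℂ)‖ = |A ν| / S := by
    rw [Complex.norm_real, Real.norm_eq_abs, abs_div, abs_of_pos hSpos]
  rw [hnorm] at h1
  have h2 : |A ν| ≤ C * (S / (a:ℝ)^ν) := by
    have heq : |A ν| = (|A ν| / S * (a:ℝ)^ν) * (S / (a:ℝ)^ν) := by
      field_simp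
    rw [heq]
    exact mul_le_mul_of_nonneg_right h1 (by positivity)
  have hSe : S = (q:ℝ) ^ ((ν:ℝ) * (1/2)) := by
    rw [hS, ← Real.rpow_natCast (q:ℝ) ν, Real.sqrt_eq_rpow, ← Real.rpow_mul hq0.le]
  have haνe : (a:ℝ)^ν = (q:ℝ) ^ (-ε * (ν:ℝ)) := by
    rw [hacoe, ← Real.rpow_natCast ((q:ℝ) ^ (-ε)) ν, ← Real.rpow_mul hq0.le]
  have h3 : S / (a:ℝ)^ν = (q:ℝ) ^ ((ν:ℝ) * (1/2 + ε)) := by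
    rw [hSe, haνe, ← Real.rpow_sub hq0]
    congr 1; ring
  rw [h3] at h2
  exact h2
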